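/- Let μ, μ_1,…,μ_n be probability distributions on a nonempty finite set Ω. If the family {μ_1,…,μ_n} strictly preserves positivity (SPP) with respect to μ, then for every index j there exist weights q_1,…,q_n ≥ 0 with Σ q_i = 1, q_j > 0, and μ = Σ_{i=1}^n q_i μ_i. -/

import Mathlib

open Finset

/-- Strictly preserves positivity (SPP). -/
def SPP {Ω : Type} [Fintype Ω] {n : ℕ} (ν : Fin n → Ω → ℝ) (μ : Ω → ℝ) : Prop :=
  ∀ u : Ω → ℝ, (∑ ω, μ ω * u ω) = 0 → (∀ i, 0 ≤ ∑ ω, ν i ω * u ω) →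
    ∀ i, (∑ ω, ν i ω * u ω) = 0


/-- Dot product of two functions on a finite type. -/
def dotp {Ω : Type} [Fintype Ω] (x y : Ω → ℝ) : ℝ := ∑ ω, x ω * y ω

lemma dotp_sub_smul_left {Ω : Type} [Fintype Ω] (x y z : Ω → ℝ) (c : ℝ) :
    dotp (x - c • y) z = dotp x z - c * dotp y z := by
  simp [dotp, sub_mul, Finset.sum_sub_distrib, Finset.mul_sum, mul_assoc]

lemma dotp_sub_smul_right {Ω : Type} [Fintype Ω] (x y z : Ω → ℝ) (c : ℝ) :
    dotp x (y - c • z) = dotp x y - c * dotp x z := by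
  simp [dotp, mul_sub, Finset.sum_sub_distrib, Finset.mul_sum]; ring_nf
  congr 1; ext ω; ring

/-- Farkas' lemma, proved by induction on the number of generators. -/
lemma farkas {Ω : Type} [Fintype Ω] (n : ℕ) :
    ∀ (v : Fin n → Ω → ℝ) (b : Ω → ℝ),
      (∃ q : Fin n → ℝ, (∀ i, 0 ≤ q i) ∧ ∀ ω, b ω = ∑ i, q i * v i ω) ∨
      (∃ u : Ω → ℝ, (∀ i, 0 ≤ dotp (v i) u) ∧ dotp b u < 0) := by
  induction n with
  | zero =>
    intro v b
    by_cases hb : ∀ ω, b ω = 0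
    · exact Or.inl ⟨fun i => 0, fun i => le_refl _, fun ω => by simp [hb ω]⟩
    · push_neg at hb
      obtain ⟨ω₀, hω₀⟩ := hb
      refine Or.inr ⟨-b, fun i => i.elim0, ?_⟩
      have h1 : dotp b (-b) = -∑ ω, b ω ^ 2 := by
        simp [dotp, sq]
      have h2 : 0 < ∑ ω, b ω ^ 2 :=
        Finset.sum_pos' (fun ω _ => sq_nonneg _) ⟨ω₀, Finset.mem_univ _, by positivity⟩
      linarith
  | succ n ih =>
    intro v b
    set v0 : Ω → ℝ := v 0 with hv0
    set vt : Fin n → Ω → ℝ := fun i => v i.succ with hvt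
    rcases ih vt b with ⟨q, hq, hb⟩ | ⟨u, hu, hbu⟩
    · refine Or.inl ⟨Fin.cons 0 q, fun i => ?_, fun ω => ?_⟩
      · refine Fin.cases ?_ ?_ i <;> simp [hq]
      · rw [Fin.sum_univ_succ]; simp [hb ω]; rfl
    · by_cases h0 : 0 ≤ dotp v0 u
      · exact Or.inr ⟨u, fun i => Fin.cases h0 hu i, hbu⟩
      · push_neg at h0
        have hdv : dotp v0 u ≠ 0 := ne_of_lt h0
        rcases ih (fun i => vt i - (dotp (vt i) u / dotp v0 u) • v0)
            (b - (dotp b u / dotp v0 u) • v0) with ⟨q, hq, hb⟩ | ⟨w, hw, hbw⟩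
        · -- reconstruct nonnegative combination
          have hcb : 0 < dotp b u / dotp v0 u := div_pos_iff.mpr (Or.inr ⟨hbu, h0⟩)
          have hci : ∀ i, dotp (vt i) u / dotp v0 u ≤ 0 := fun i =>
            div_nonpos_of_nonneg_of_nonpos (hu i) h0.le
          have hsum : ∑ i, q i * (dotp (vt i) u / dotp v0 u) ≤ 0 :=
            Finset.sum_nonpos fun i _ => mul_nonpos_iff.mpr (Or.inl ⟨hq i, hci i⟩)
          refine Or.inl ⟨Fin.cons (dotp b u / dotp v0 u - ∑ i, q i * (dotp (vt i) u / dotp v0 u)) q,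
            fun i => ?_, fun ω => ?_⟩
          · refine Fin.cases ?_ ?_ i
            · simp only [Fin.cons_zero]; linarith
            · intro i; simp [hq i]
          · have h1 := hb ω
            simp only [Pi.sub_apply, Pi.smul_apply, smul_eq_mul] at h1
            have h2 : ∑ i, q i * (vt i ω - dotp (vt i) u / dotp v0 u * v0 ω)
                = ∑ i, q i * vt i ω - (∑ i, q i * (dotp (vt i) u / dotp v0 u)) * v0 ω := by
              rw [Finset.sum_mul, ← Finset.sum_sub_distrib]
              exact Finset.sum_congr rfl fun i _ => by ring
            rw [Fin.sum_univ_succ]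
            simp only [Fin.cons_zero, Fin.cons_succ]
            have h3 := h1.trans h2
            have : ∑ i, q i * vt i ω = ∑ i, q i * v i.succ ω := rfl
            linarith [h3]
        · -- build a separating vector
          refine Or.inr ⟨w - (dotp v0 w / dotp v0 u) • u, fun i => ?_, ?_⟩
          · refine Fin.cases ?_ ?_ i
            · rw [show v 0 = v0 from rfl, dotp_sub_smul_right]
              have : dotp v0 w / dotp v0 u * dotp v0 u = dotp v0 w := div_mul_cancel₀ _ hdv
              linarith
            · intro i
              have h1 := hw i
              rw [dotp_sub_smul_left] at h1
              rw [show v i.succ = vt i from rfl, dotp_sub_smul_right]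
              have : dotp v0 w / dotp v0 u * dotp (vt i) u
                  = dotp (vt i) u / dotp v0 u * dotp v0 w := by ring
              linarith
          · rw [dotp_sub_smul_left] at hbw
            rw [dotp_sub_smul_right]
            have : dotp v0 w / dotp v0 u * dotp b u
                = dotp b u / dotp v0 u * dotp v0 w := by ring
            linarith

/-- Lemma 2: if `{μ_1,…,μ_n}` strictly preserves positivity with
respect to `μ`, then for every index `j` there is a convex combination
`μ = ∑ q_i μ_i` with `q_j > 0`. -/
theorem stmt_11 {Ω : Type} [Fintype Ω] [Nonempty Ω] {n : ℕ}
    (μ : Ω → ℝ) (hμ0 : ∀ ω, 0 ≤ μ ω) (hμ1 : (∑ ω, μ ω) = 1)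
    (ν : Fin n → Ω → ℝ) (hν : ∀ i, (∀ ω, 0 ≤ ν i ω) ∧ ((∑ ω, ν i ω) = 1))
    (hSPP : SPP ν μ) :
    ∀ j : Fin n, ∃ q : Fin n → ℝ, (∀ i, 0 ≤ q i) ∧ ((∑ i, q i) = 1) ∧ 0 < q j ∧
      (∀ ω, μ ω = ∑ i, q i * ν i ω) := by
  intro j
  rcases farkas n (fun i ω => ν i ω - μ ω) (fun ω => μ ω - ν j ω) with
    ⟨q, hq, hrep⟩ | ⟨u, hu, hbu⟩
  · -- reconstruct the convex combination
    have hS : 0 ≤ ∑ i, q i := Finset.sum_nonneg fun i _ => hq i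
    have hQ : 0 < 1 + ∑ i, q i := by linarith
    refine ⟨fun i => (q i + if i = j then 1 else 0) / (1 + ∑ i, q i), fun i => ?_, ?_, ?_, ?_⟩
    · apply div_nonneg _ hQ.le
      have : (0:ℝ) ≤ if i = j then 1 else 0 := by positivity
      linarith [hq i]
    · rw [← Finset.sum_div]
      rw [Finset.sum_add_distrib, Finset.sum_ite_eq' univ j (fun _ => (1:ℝ)) ]
      simp only [Finset.mem_univ, if_pos]
      rw [div_eq_one_iff_eq hQ.ne']
      ring
    · have h : ((fun i => (q i + if i = j then 1 else 0) / (1 + ∑ i, q i)) j)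
          = (q j + 1) / (1 + ∑ i, q i) := by simp
      rw [h]
      exact div_pos (by linarith [hq j]) hQ
    · intro ω
      have key : (1 + ∑ i, q i) * μ ω = ∑ i, (q i + if i = j then 1 else 0) * ν i ω := by
        have h := hrep ω
        have e : ∑ i, q i * (ν i ω - μ ω) = (∑ i, q i * ν i ω) - (∑ i, q i) * μ ω := by
          rw [Finset.sum_mul, ← Finset.sum_sub_distrib]
          exact Finset.sum_congr rfl fun i _ => by ring
        have e2 : ∑ i, (q i + if i = j then 1 else 0) * ν i ω
            = (∑ i, q i * ν i ω) + ν j ω := by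
          have hco : ∀ i ∈ univ, (q i + if i = j then 1 else 0) * ν i ω
              = q i * ν i ω + (if i = j then ν i ω else 0) := fun i _ => by split <;> ring
          rw [Finset.sum_congr rfl hco, Finset.sum_add_distrib,
            Finset.sum_ite_eq' univ j (fun i => ν i ω)]
          simp
        linarith [h, e, e2]
      have hd : ∑ i, (q i + if i = j then 1 else 0) / (1 + ∑ i, q i) * ν i ω
          = (∑ i, (q i + if i = j then 1 else 0) * ν i ω) / (1 + ∑ i, q i) := by
        rw [Finset.sum_div]
        exact Finset.sum_congr rfl fun i _ => by ring
      rw [hd, eq_div_iff hQ.ne']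
      linear_combination key
  · -- contradiction with SPP
    exfalso
    set w : Ω → ℝ := fun ω => u ω - ∑ x, μ x * u x with hw
    have h1 : ∑ ω, μ ω * w ω = 0 := by
      have : ∑ ω, μ ω * w ω = (∑ ω, μ ω * u ω) - (∑ ω, μ ω) * (∑ x, μ x * u x) := by
        rw [Finset.sum_mul, ← Finset.sum_sub_distrib]
        exact Finset.sum_congr rfl fun ω _ => by simp [hw]; ring
      rw [this, hμ1]; ring
    have h2 : ∀ i, ∑ ω, ν i ω * w ω = ∑ ω, ν i ω * u ω - ∑ x, μ x * u x := by
      intro i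
      have : ∑ ω, ν i ω * w ω = (∑ ω, ν i ω * u ω) - (∑ ω, ν i ω) * (∑ x, μ x * u x) := by
        rw [Finset.sum_mul, ← Finset.sum_sub_distrib]
        exact Finset.sum_congr rfl fun ω _ => by simp [hw]; ring
      rw [this, (hν i).2]; ring
    have h3 : ∀ i, dotp (fun ω => ν i ω - μ ω) u = ∑ ω, ν i ω * u ω - ∑ ω, μ ω * u ω := by
      intro i
      rw [dotp, ← Finset.sum_sub_distrib]
      exact Finset.sum_congr rfl fun ω _ => by ring
    have h4 : dotp (fun ω => μ ω - ν j ω) u = ∑ ω, μ ω * u ω - ∑ ω, ν j ω * u ω := by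
      rw [dotp, ← Finset.sum_sub_distrib]
      exact Finset.sum_congr rfl fun ω _ => by ring
    have h5 : ∀ i, 0 ≤ ∑ ω, ν i ω * w ω := by
      intro i; rw [h2 i]
      have := hu i; rw [h3 i] at this; linarith
    have h6 := hSPP w h1 h5 j
    rw [h2 j] at h6
    rw [h4] at hbu
    linarith
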